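/- Fix a natural number d ≥ 4 and let H := EuclideanSpace ℂ (Fin d) with standard orthonormal basis (b i)_{i ∈ Fin d}. There is no operational-eigenstate support macro-realist ontological model of the d-dimensional quantum system, in the following sense: there do not exist (a) a measurable space Λ; (b) for every unit vector ψ ∈ H a nonempty set Δ(ψ) of probability measures on Λ; (c) for every linear isometric equivalence U : H ≃ₗᵢ H a nonempty set Γ(U) of Markov kernels from Λ to Λ; (d) for every orthonormal basis e : Fin d → H a nonempty set Ξ(e) of families P : Fin d → Λ → ℝ of measurable functions satisfying 0 ≤ P i λ and Σ_{i} P i λ = 1 for all λ ∈ Λ; such that all three of the following hold: (Born rule) for every unit vector ψ, every μ ∈ Δ(ψ), every orthonormal basis e, every P ∈ Ξ(e) and every i ∈ Fin d, ∫ (P i) dμ = ‖⟪e i, ψ⟫‖²; (Closure under transformations) for every unit vector ψ, every μ ∈ Δ(ψ), every linear isometric equivalence U and every γ ∈ Γ(U), the probability measure μ.bind γ (i.e. Ω ↦ ∫ γ(λ)(Ω) dμ(λ)) belongs to Δ(U ψ); (ESMR/EMMR support condition) for every measurable Ω ⊆ Λ such that ν(Ω) = 1 for every ν ∈ ⋃_{i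 ∈ Fin d} Δ(b i), and for every unit vector ψ and every μ ∈ Δ(ψ), one has μ(Ω) = 1. -/

import Mathlib

open MeasureTheory ProbabilityTheory
open scoped InnerProductSpace
open scoped ENNReal

noncomputable section

namespace NoGo

variable {d : ℕ}

abbrev Hd (d : ℕ) := EuclideanSpace ℂ (Fin d)

/-- standard basis vector -/
def ev (i : Fin d) : Hd d := EuclideanSpace.single i 1

lemma norm_ev (i : Fin d) : ‖(ev i : Hd d)‖ = 1 := by
  simp [ev, EuclideanSpace.norm_single]

lemma inner_ev_ev (i j : Fin d) : ⟪(ev i : Hd d), ev j⟫_ℂ = if i = j then 1 else 0 := by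
  simp only [ev, EuclideanSpace.inner_single_left, EuclideanSpace.single_apply, map_one, one_mul]

def fi (hd : 4 ≤ d) (n : Fin 4) : Fin d := ⟨n.1, lt_of_lt_of_le n.2 hd⟩

lemma fi_ne (hd : 4 ≤ d) {m n : Fin 4} (h : m ≠ n) : fi hd m ≠ fi hd n := by
  simpa [fi, Fin.ext_iff] using fun hmn => h (Fin.ext hmn)

/-- the scalar 1/√2 -/
def c2 : ℂ := ((Real.sqrt 2)⁻¹ : ℝ)

lemma conj_c2 : (starRingEnd ℂ) c2 = c2 := by simp [c2]

lemma c2_mul_c2 : c2 * c2 = (2⁻¹ : ℂ) := by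
  have h : (Real.sqrt 2)⁻¹ * (Real.sqrt 2)⁻¹ = (2⁻¹ : ℝ) := by
    rw [← mul_inv, Real.mul_self_sqrt (by norm_num)]
  rw [c2, ← Complex.ofReal_mul, h]
  norm_num

lemma norm_c2_sq : ‖c2‖ ^ 2 = 2⁻¹ := by
  rw [c2, Complex.norm_real, Real.norm_eq_abs, abs_of_nonneg (by positivity),
    ← Real.sqrt_inv, Real.sq_sqrt (by norm_num)]

/-- the state (1,1,1,1)/2 -/
def psi1 (hd : 4 ≤ d) : Hd d :=
  (2⁻¹ : ℂ) • (ev (fi hd ⟨0, by omega⟩) + ev (fi hd ⟨1, by omega⟩) +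
    ev (fi hd ⟨2, by omega⟩) + ev (fi hd ⟨3, by omega⟩))

lemma inner_ev_psi1 (hd : 4 ≤ d) {a : Fin d} (ha : a.1 < 4) :
    ⟪(ev a : Hd d), psi1 hd⟫_ℂ = 2⁻¹ := by
  obtain ⟨n, rfl⟩ : ∃ n : Fin 4, a = fi hd n := ⟨⟨a.1, ha⟩, by simp [fi]⟩
  rw [psi1, inner_smul_right, inner_add_right, inner_add_right, inner_add_right,
    inner_ev_ev, inner_ev_ev, inner_ev_ev, inner_ev_ev]
  fin_cases n <;> simp [fi, Fin.ext_iff] <;> norm_num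

lemma inner_ev_psi1_high (hd : 4 ≤ d) {a : Fin d} (ha : 4 ≤ a.1) :
    ⟪(ev a : Hd d), psi1 hd⟫_ℂ = 0 := by
  have h : ∀ n : Fin 4, a ≠ fi hd n := by
    intro n hn
    rw [Fin.ext_iff] at hn
    simp [fi] at hn
    omega
  rw [psi1, inner_smul_right, inner_add_right, inner_add_right, inner_add_right,
    inner_ev_ev, inner_ev_ev, inner_ev_ev, inner_ev_ev,
    if_neg (h ⟨0, by omega⟩), if_neg (h ⟨1, by omega⟩), if_neg (h ⟨2, by omega⟩),
    if_neg (h ⟨3, by omega⟩)]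
  norm_num

lemma inner_psi1_ev (hd : 4 ≤ d) {a : Fin d} (ha : a.1 < 4) :
    ⟪psi1 hd, (ev a : Hd d)⟫_ℂ = 2⁻¹ := by
  rw [← inner_conj_symm, inner_ev_psi1 hd ha, map_inv₀, map_ofNat]

lemma inner_psi1_psi1 (hd : 4 ≤ d) : ⟪psi1 hd, psi1 hd⟫_ℂ = 1 := by
  have h : ∀ n : Fin 4, ⟪(ev (fi hd n) : Hd d), psi1 hd⟫_ℂ = 2⁻¹ := fun n =>
    inner_ev_psi1 hd (by simpa [fi] using n.2)
  nth_rewrite 1 [psi1]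
  rw [inner_smul_left, inner_add_left, inner_add_left, inner_add_left,
    h ⟨0, by omega⟩, h ⟨1, by omega⟩, h ⟨2, by omega⟩, h ⟨3, by omega⟩]
  rw [map_inv₀, map_ofNat]
  norm_num

lemma norm_eq_one_of_inner {x : Hd d} (h : ⟪x, x⟫_ℂ = 1) : ‖x‖ = 1 := by
  have h2 : (⟪x, x⟫_ℂ) = ((‖x‖ : ℂ) ^ 2) := inner_self_eq_norm_sq_to_K x
  rw [h] at h2
  have h3 : (‖x‖ : ℝ) ^ 2 = 1 := by exact_mod_cast h2.symm
  nlinarith [norm_nonneg x]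

lemma norm_psi1 (hd : 4 ≤ d) : ‖psi1 hd‖ = 1 := norm_eq_one_of_inner (inner_psi1_psi1 hd)

/-- the state ψ₁ - e_{i0} -/
def chi (hd : 4 ≤ d) (i0 : Fin d) : Hd d := psi1 hd - ev i0

lemma inner_ev_chi_self (hd : 4 ≤ d) {i0 : Fin d} (h : i0.1 < 4) :
    ⟪(ev i0 : Hd d), chi hd i0⟫_ℂ = -2⁻¹ := by
  rw [chi, inner_sub_right, inner_ev_psi1 hd h, inner_ev_ev, if_pos rfl]
  norm_num

lemma inner_ev_chi_other (hd : 4 ≤ d) {i0 a : Fin d} (ha : a.1 < 4) (hne : a ≠ i0) :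
    ⟪(ev a : Hd d), chi hd i0⟫_ℂ = 2⁻¹ := by
  rw [chi, inner_sub_right, inner_ev_psi1 hd ha, inner_ev_ev, if_neg hne]
  norm_num

lemma norm_chi (hd : 4 ≤ d) {i0 : Fin d} (h : i0.1 < 4) : ‖chi hd i0‖ = 1 := by
  refine norm_eq_one_of_inner ?_
  rw [chi, inner_sub_left, inner_sub_right, inner_sub_right, inner_psi1_psi1 hd,
    inner_psi1_ev hd h, inner_ev_psi1 hd h, inner_ev_ev, if_pos rfl]
  norm_num


section Basis

variable {d : ℕ}

lemma inner_combo_left (a b : Fin d) (s : ℂ) (z : Hd d) :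
    ⟪c2 • (ev a + s • ev b), z⟫_ℂ = c2 * (⟪ev a, z⟫_ℂ + (starRingEnd ℂ) s * ⟪ev b, z⟫_ℂ) := by
  rw [inner_smul_left, conj_c2, inner_add_left, inner_smul_left, mul_add]

lemma inner_combo_ev (a b t : Fin d) {s : ℂ} :
    ⟪c2 • (ev a + s • ev b), ev t⟫_ℂ =
      c2 * ((if a = t then 1 else 0) + (starRingEnd ℂ) s * (if b = t then 1 else 0)) := by
  rw [inner_combo_left, inner_ev_ev, inner_ev_ev]

lemma inner_ev_combo (t a b : Fin d) {s : ℂ} :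
    ⟪(ev t : Hd d), c2 • (ev a + s • ev b)⟫_ℂ =
      c2 * ((if t = a then 1 else 0) + s * (if t = b then 1 else 0)) := by
  rw [inner_smul_right, inner_add_right, inner_smul_right, inner_ev_ev, inner_ev_ev, mul_add]

lemma inner_combo_combo (a b u w : Fin d) (s t : ℂ) :
    ⟪c2 • (ev a + s • ev b), c2 • (ev u + t • ev w)⟫_ℂ =
      2⁻¹ * (((if a = u then 1 else 0) + t * (if a = w then 1 else 0)) +
        (starRingEnd ℂ) s * ((if b = u then 1 else 0) + t * (if b = w then 1 else 0))) := by
  rw [inner_combo_left, inner_ev_combo, inner_ev_combo, ← c2_mul_c2]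
  ring

/-- the measurement basis vectors -/
def vfam (x y p q : Fin d) : Fin d → Hd d := fun k =>
  if k.1 = 0 then c2 • (ev p + (1:ℂ) • ev q)
  else if k.1 = 1 then c2 • (ev x + (1:ℂ) • ev y)
  else if k.1 = 2 then c2 • (ev p + (-1:ℂ) • ev q)
  else if k.1 = 3 then c2 • (ev x + (-1:ℂ) • ev y)
  else ev k

variable (x y p q : Fin d)

lemma vfam_apply0 {k : Fin d} (h : k.1 = 0) : vfam x y p q k = c2 • (ev p + (1:ℂ) • ev q) := by
  simp only [vfam]; rw [if_pos h]

lemma vfam_apply1 {k : Fin d} (h : k.1 = 1) : vfam x y p q k = c2 • (ev x + (1:ℂ) • ev y) := by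
  simp only [vfam]; rw [if_neg (by omega), if_pos h]

lemma vfam_apply2 {k : Fin d} (h : k.1 = 2) : vfam x y p q k = c2 • (ev p + (-1:ℂ) • ev q) := by
  simp only [vfam]; rw [if_neg (by omega), if_neg (by omega), if_pos h]

lemma vfam_apply3 {k : Fin d} (h : k.1 = 3) : vfam x y p q k = c2 • (ev x + (-1:ℂ) • ev y) := by
  simp only [vfam]; rw [if_neg (by omega), if_neg (by omega), if_neg (by omega), if_pos h]

lemma vfam_apply_hi {k : Fin d} (h : 4 ≤ k.1) : vfam x y p q k = ev k := by
  simp only [vfam]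
  rw [if_neg (by omega), if_neg (by omega), if_neg (by omega), if_neg (by omega)]

lemma vfam_orthonormal
    (hx : x.1 < 4) (hy : y.1 < 4) (hp : p.1 < 4) (hq : q.1 < 4)
    (hxy : x ≠ y) (hpq : p ≠ q) (hpx : p ≠ x) (hpy : p ≠ y) (hqx : q ≠ x) (hqy : q ≠ y) :
    Orthonormal ℂ (vfam x y p q) := by
  rw [orthonormal_iff_ite]
  intro k l
  have hsplit : ∀ m : Fin d, m.1 = 0 ∨ m.1 = 1 ∨ m.1 = 2 ∨ m.1 = 3 ∨ 4 ≤ m.1 := fun m => by omega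
  rcases hsplit k with hk | hk | hk | hk | hk <;> rcases hsplit l with hl | hl | hl | hl | hl
  · rw [vfam_apply0 x y p q hk, vfam_apply0 x y p q hl, inner_combo_combo,
      if_pos (show k = l from Fin.ext (by omega))]
    norm_num [hpq, hpq.symm, hpx, hpx.symm, hpy, hpy.symm, hqx, hqx.symm, hqy, hqy.symm, hxy, hxy.symm]
  · rw [vfam_apply0 x y p q hk, vfam_apply1 x y p q hl, inner_combo_combo,
      if_neg (show k ≠ l from Fin.ne_of_val_ne (by omega))]
    norm_num [hpq, hpq.symm, hpx, hpx.symm, hpy, hpy.symm, hqx, hqx.symm, hqy, hqy.symm, hxy, hxy.symm]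
  · rw [vfam_apply0 x y p q hk, vfam_apply2 x y p q hl, inner_combo_combo,
      if_neg (show k ≠ l from Fin.ne_of_val_ne (by omega))]
    norm_num [hpq, hpq.symm, hpx, hpx.symm, hpy, hpy.symm, hqx, hqx.symm, hqy, hqy.symm, hxy, hxy.symm]
  · rw [vfam_apply0 x y p q hk, vfam_apply3 x y p q hl, inner_combo_combo,
      if_neg (show k ≠ l from Fin.ne_of_val_ne (by omega))]
    norm_num [hpq, hpq.symm, hpx, hpx.symm, hpy, hpy.symm, hqx, hqx.symm, hqy, hqy.symm, hxy, hxy.symm]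
  · rw [vfam_apply0 x y p q hk, vfam_apply_hi x y p q hl, inner_combo_ev,
      if_neg (show k ≠ l from Fin.ne_of_val_ne (by omega))]
    norm_num [show p ≠ l from Fin.ne_of_val_ne (by omega),
      show q ≠ l from Fin.ne_of_val_ne (by omega)]
  · rw [vfam_apply1 x y p q hk, vfam_apply0 x y p q hl, inner_combo_combo,
      if_neg (show k ≠ l from Fin.ne_of_val_ne (by omega))]
    norm_num [hpq, hpq.symm, hpx, hpx.symm, hpy, hpy.symm, hqx, hqx.symm, hqy, hqy.symm, hxy, hxy.symm]
  · rw [vfam_apply1 x y p q hk, vfam_apply1 x y p q hl, inner_combo_combo,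
      if_pos (show k = l from Fin.ext (by omega))]
    norm_num [hpq, hpq.symm, hpx, hpx.symm, hpy, hpy.symm, hqx, hqx.symm, hqy, hqy.symm, hxy, hxy.symm]
  · rw [vfam_apply1 x y p q hk, vfam_apply2 x y p q hl, inner_combo_combo,
      if_neg (show k ≠ l from Fin.ne_of_val_ne (by omega))]
    norm_num [hpq, hpq.symm, hpx, hpx.symm, hpy, hpy.symm, hqx, hqx.symm, hqy, hqy.symm, hxy, hxy.symm]
  · rw [vfam_apply1 x y p q hk, vfam_apply3 x y p q hl, inner_combo_combo,
      if_neg (show k ≠ l from Fin.ne_of_val_ne (by omega))]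
    norm_num [hpq, hpq.symm, hpx, hpx.symm, hpy, hpy.symm, hqx, hqx.symm, hqy, hqy.symm, hxy, hxy.symm]
  · rw [vfam_apply1 x y p q hk, vfam_apply_hi x y p q hl, inner_combo_ev,
      if_neg (show k ≠ l from Fin.ne_of_val_ne (by omega))]
    norm_num [show x ≠ l from Fin.ne_of_val_ne (by omega),
      show y ≠ l from Fin.ne_of_val_ne (by omega)]
  · rw [vfam_apply2 x y p q hk, vfam_apply0 x y p q hl, inner_combo_combo,
      if_neg (show k ≠ l from Fin.ne_of_val_ne (by omega))]
    norm_num [hpq, hpq.symm, hpx, hpx.symm, hpy, hpy.symm, hqx, hqx.symm, hqy, hqy.symm, hxy, hxy.symm]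
  · rw [vfam_apply2 x y p q hk, vfam_apply1 x y p q hl, inner_combo_combo,
      if_neg (show k ≠ l from Fin.ne_of_val_ne (by omega))]
    norm_num [hpq, hpq.symm, hpx, hpx.symm, hpy, hpy.symm, hqx, hqx.symm, hqy, hqy.symm, hxy, hxy.symm]
  · rw [vfam_apply2 x y p q hk, vfam_apply2 x y p q hl, inner_combo_combo,
      if_pos (show k = l from Fin.ext (by omega))]
    norm_num [hpq, hpq.symm, hpx, hpx.symm, hpy, hpy.symm, hqx, hqx.symm, hqy, hqy.symm, hxy, hxy.symm]
  · rw [vfam_apply2 x y p q hk, vfam_apply3 x y p q hl, inner_combo_combo,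
      if_neg (show k ≠ l from Fin.ne_of_val_ne (by omega))]
    norm_num [hpq, hpq.symm, hpx, hpx.symm, hpy, hpy.symm, hqx, hqx.symm, hqy, hqy.symm, hxy, hxy.symm]
  · rw [vfam_apply2 x y p q hk, vfam_apply_hi x y p q hl, inner_combo_ev,
      if_neg (show k ≠ l from Fin.ne_of_val_ne (by omega))]
    norm_num [show p ≠ l from Fin.ne_of_val_ne (by omega),
      show q ≠ l from Fin.ne_of_val_ne (by omega)]
  · rw [vfam_apply3 x y p q hk, vfam_apply0 x y p q hl, inner_combo_combo,
      if_neg (show k ≠ l from Fin.ne_of_val_ne (by omega))]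
    norm_num [hpq, hpq.symm, hpx, hpx.symm, hpy, hpy.symm, hqx, hqx.symm, hqy, hqy.symm, hxy, hxy.symm]
  · rw [vfam_apply3 x y p q hk, vfam_apply1 x y p q hl, inner_combo_combo,
      if_neg (show k ≠ l from Fin.ne_of_val_ne (by omega))]
    norm_num [hpq, hpq.symm, hpx, hpx.symm, hpy, hpy.symm, hqx, hqx.symm, hqy, hqy.symm, hxy, hxy.symm]
  · rw [vfam_apply3 x y p q hk, vfam_apply2 x y p q hl, inner_combo_combo,
      if_neg (show k ≠ l from Fin.ne_of_val_ne (by omega))]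
    norm_num [hpq, hpq.symm, hpx, hpx.symm, hpy, hpy.symm, hqx, hqx.symm, hqy, hqy.symm, hxy, hxy.symm]
  · rw [vfam_apply3 x y p q hk, vfam_apply3 x y p q hl, inner_combo_combo,
      if_pos (show k = l from Fin.ext (by omega))]
    norm_num [hpq, hpq.symm, hpx, hpx.symm, hpy, hpy.symm, hqx, hqx.symm, hqy, hqy.symm, hxy, hxy.symm]
  · rw [vfam_apply3 x y p q hk, vfam_apply_hi x y p q hl, inner_combo_ev,
      if_neg (show k ≠ l from Fin.ne_of_val_ne (by omega))]
    norm_num [show x ≠ l from Fin.ne_of_val_ne (by omega),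
      show y ≠ l from Fin.ne_of_val_ne (by omega)]
  · rw [vfam_apply_hi x y p q hk, vfam_apply0 x y p q hl, inner_ev_combo,
      if_neg (show k ≠ l from Fin.ne_of_val_ne (by omega))]
    norm_num [show k ≠ p from Fin.ne_of_val_ne (by omega),
      show k ≠ q from Fin.ne_of_val_ne (by omega)]
  · rw [vfam_apply_hi x y p q hk, vfam_apply1 x y p q hl, inner_ev_combo,
      if_neg (show k ≠ l from Fin.ne_of_val_ne (by omega))]
    norm_num [show k ≠ x from Fin.ne_of_val_ne (by omega),
      show k ≠ y from Fin.ne_of_val_ne (by omega)]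
  · rw [vfam_apply_hi x y p q hk, vfam_apply2 x y p q hl, inner_ev_combo,
      if_neg (show k ≠ l from Fin.ne_of_val_ne (by omega))]
    norm_num [show k ≠ p from Fin.ne_of_val_ne (by omega),
      show k ≠ q from Fin.ne_of_val_ne (by omega)]
  · rw [vfam_apply_hi x y p q hk, vfam_apply3 x y p q hl, inner_ev_combo,
      if_neg (show k ≠ l from Fin.ne_of_val_ne (by omega))]
    norm_num [show k ≠ x from Fin.ne_of_val_ne (by omega),
      show k ≠ y from Fin.ne_of_val_ne (by omega)]
  · rw [vfam_apply_hi x y p q hk, vfam_apply_hi x y p q hl, inner_ev_ev]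

end Basis
section Basis2

variable {d : ℕ}

lemma compPair (hd : 4 ≤ d) {x y : Fin d} (hx : x.1 < 4) (hy : y.1 < 4) (hxy : x ≠ y) :
    ∃ p q : Fin d, p.1 < 4 ∧ q.1 < 4 ∧ p ≠ q ∧ p ≠ x ∧ p ≠ y ∧ q ≠ x ∧ q ≠ y := by
  have h : ∀ u v : Fin 4, u ≠ v → ∃ p q : Fin 4, p ≠ q ∧ p ≠ u ∧ p ≠ v ∧ q ≠ u ∧ q ≠ v := by
    decide
  obtain ⟨p4, q4, h1, h2, h3, h4, h5⟩ :=
    h ⟨x.1, hx⟩ ⟨y.1, hy⟩ (fun hc => hxy (Fin.ext (by simpa [Fin.ext_iff] using hc)))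
  simp only [ne_eq, Fin.ext_iff] at h1 h2 h3 h4 h5
  exact ⟨⟨p4.1, by omega⟩, ⟨q4.1, by omega⟩, p4.2, q4.2,
    Fin.ne_of_val_ne h1, Fin.ne_of_val_ne h2, Fin.ne_of_val_ne h3,
    Fin.ne_of_val_ne h4, Fin.ne_of_val_ne h5⟩

/-- Existence of the antidistinguishing measurement basis for the pair (x = i0, y = j). -/
lemma exists_measurement (hd : 4 ≤ d) {x y : Fin d} (hx : x.1 < 4) (hy : y.1 < 4)
    (hxy : x ≠ y) :
    ∃ B : OrthonormalBasis (Fin d) ℂ (Hd d),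
      ⟪B ⟨0, by omega⟩, (ev x : Hd d)⟫_ℂ = 0 ∧
      ⟪B ⟨0, by omega⟩, (ev y : Hd d)⟫_ℂ = 0 ∧
      ‖⟪B ⟨0, by omega⟩, psi1 hd⟫_ℂ‖ ^ 2 = 2⁻¹ ∧
      ⟪B ⟨1, by omega⟩, chi hd x⟫_ℂ = 0 ∧
      ‖⟪B ⟨1, by omega⟩, psi1 hd⟫_ℂ‖ ^ 2 = 2⁻¹ := by
  obtain ⟨p, q, hp, hq, hpq, hpx, hpy, hqx, hqy⟩ := compPair hd hx hy hxy
  haveI : Nonempty (Fin d) := ⟨x⟩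
  have hon := vfam_orthonormal x y p q hx hy hp hq hxy hpq hpx hpy hqx hqy
  have hcard : Fintype.card (Fin d) = Module.finrank ℂ (Hd d) := by
    simp
  let b := basisOfLinearIndependentOfCardEqFinrank hon.linearIndependent hcard
  have hb : ⇑b = vfam x y p q := coe_basisOfLinearIndependentOfCardEqFinrank _ _
  refine ⟨b.toOrthonormalBasis (by rwa [hb]), ?_, ?_, ?_, ?_, ?_⟩ <;>
    rw [show ⇑(b.toOrthonormalBasis (by rwa [hb])) = vfam x y p q from
      (Module.Basis.coe_toOrthonormalBasis _ _).trans hb]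
  · rw [vfam_apply0 x y p q rfl, inner_combo_ev, if_neg hpx, if_neg hqx]
    norm_num
  · rw [vfam_apply0 x y p q rfl, inner_combo_ev, if_neg hpy, if_neg hqy]
    norm_num
  · rw [vfam_apply0 x y p q rfl, inner_combo_left, inner_ev_psi1 hd hp, inner_ev_psi1 hd hq,
      map_one, show ((2:ℂ)⁻¹ + 1 * 2⁻¹ : ℂ) = 1 by norm_num, mul_one]
    exact norm_c2_sq
  · rw [vfam_apply1 x y p q rfl, inner_combo_left, inner_ev_chi_self hd hx,
      inner_ev_chi_other hd hy (Ne.symm hxy), map_one]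
    ring
  · rw [vfam_apply1 x y p q rfl, inner_combo_left, inner_ev_psi1 hd hx, inner_ev_psi1 hd hy,
      map_one, show ((2:ℂ)⁻¹ + 1 * 2⁻¹ : ℂ) = 1 by norm_num, mul_one]
    exact norm_c2_sq

lemma reflection_psi1 (hd : 4 ≤ d) :
    (Submodule.reflection (ℂ ∙ (psi1 hd)) : Hd d ≃ₗᵢ[ℂ] Hd d) (psi1 hd) = psi1 hd :=
  Submodule.reflection_mem_subspace_eq_self (Submodule.mem_span_singleton_self _)

lemma reflection_ev (hd : 4 ≤ d) {i0 : Fin d} (h : i0.1 < 4) :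
    (Submodule.reflection (ℂ ∙ (psi1 hd)) : Hd d ≃ₗᵢ[ℂ] Hd d) (ev i0) = chi hd i0 := by
  rw [Submodule.reflection_apply, Submodule.starProjection_unit_singleton ℂ (norm_psi1 hd),
    inner_psi1_ev hd h, chi]
  module

end Basis2

section Meas

variable {Λ : Type} [MeasurableSpace Λ]

lemma full_of_ae {μ : Measure Λ} [IsProbabilityMeasure μ] {S : Set Λ}
    (hS : MeasurableSet S) (h : ∀ᵐ z ∂μ, z ∈ S) : μ S = 1 := by
  rw [← prob_compl_eq_zero_iff hS]
  exact ae_iff.mp h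

lemma bdd_integrable (μ : Measure Λ) [IsProbabilityMeasure μ] {f : Λ → ℝ}
    (hf : Measurable f) (h0 : ∀ z, 0 ≤ f z) (h1 : ∀ z, f z ≤ 1) : Integrable f μ :=
  Integrable.mono' (integrable_const 1) hf.aestronglyMeasurable
    (Filter.Eventually.of_forall fun z => by
      rw [Real.norm_eq_abs, abs_of_nonneg (h0 z)]; exact h1 z)

lemma full_of_integral_zero {μ : Measure Λ} [IsProbabilityMeasure μ] {f : Λ → ℝ}
    (hf : Measurable f) (h0 : ∀ z, 0 ≤ f z) (h1 : ∀ z, f z ≤ 1)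
    (hint : ∫ z, f z ∂μ = 0) : μ {z | f z = 0} = 1 := by
  have hae : f =ᵐ[μ] 0 :=
    (integral_eq_zero_iff_of_nonneg h0 (bdd_integrable μ hf h0 h1)).mp hint
  exact full_of_ae (hf (measurableSet_singleton 0)) (hae.mono fun z hz => hz)

lemma full_of_integral_one {μ : Measure Λ} [IsProbabilityMeasure μ] {f : Λ → ℝ}
    (hf : Measurable f) (h0 : ∀ z, 0 ≤ f z) (h1 : ∀ z, f z ≤ 1)
    (hint : ∫ z, f z ∂μ = 1) : μ {z | f z = 1} = 1 := by
  have h2 : μ {z | 1 - f z = 0} = 1 := by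
    refine full_of_integral_zero (measurable_const.sub hf)
      (fun z => by linarith [h1 z]) (fun z => by linarith [h0 z]) ?_
    rw [integral_sub (integrable_const 1) (bdd_integrable μ hf h0 h1), integral_const]
    simp [hint]
  have : {z | 1 - f z = 0} = {z | f z = 1} := by
    ext z
    simp only [Set.mem_setOf_eq]
    constructor <;> (intro h; linarith)
  rwa [this] at h2

lemma null_of_integral_zero {μ : Measure Λ} [IsProbabilityMeasure μ] {f : Λ → ℝ}
    (hf : Measurable f) (h0 : ∀ z, 0 ≤ f z) (h1 : ∀ z, f z ≤ 1)
    (hint : ∫ z, f z ∂μ = 0) : μ {z | f z = 1} = 0 := by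
  have hae : f =ᵐ[μ] 0 :=
    (integral_eq_zero_iff_of_nonneg h0 (bdd_integrable μ hf h0 h1)).mp hint
  refine measure_mono_null (fun z hz => ?_) (ae_iff.mp hae)
  simp only [Set.mem_setOf_eq] at hz ⊢
  rw [hz]; norm_num

open ENNReal in
lemma lintegral_full {μ : Measure Λ} [IsProbabilityMeasure μ] {g : Λ → ℝ≥0∞}
    (hg : Measurable g) (h1 : ∀ z, g z ≤ 1) (hint : ∫⁻ z, g z ∂μ = 1) :
    μ {z | g z = 1} = 1 := by
  have hsub : ∫⁻ z, (1 - g z) ∂μ = 0 := by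
    rw [lintegral_sub hg (by rw [hint]; exact one_ne_top)
      (Filter.Eventually.of_forall h1), lintegral_one, measure_univ, hint, tsub_self]
  have hae := (lintegral_eq_zero_iff (measurable_const.sub hg)).mp hsub
  refine full_of_ae (hg (measurableSet_singleton 1)) (hae.mono fun z hz => ?_)
  simp only [Pi.zero_apply] at hz
  exact le_antisymm (h1 z) (tsub_eq_zero_iff_le.mp hz)

lemma measure_le_lintegral {μ : Measure Λ} {g : Λ → ℝ≥0∞} {A : Set Λ}
    (hA : MeasurableSet A) (h : ∀ z ∈ A, g z = 1) : μ A ≤ ∫⁻ z, g z ∂μ := by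
  rw [← lintegral_indicator_one hA]
  refine lintegral_mono fun z => ?_
  by_cases hz : z ∈ A
  · simp [Set.indicator_of_mem hz, h z hz]
  · simp [Set.indicator_of_notMem hz]

end Meas
end NoGo

open NoGo

theorem no_esmr_emmr_model (d : ℕ) (hd : 4 ≤ d) :
    ¬ ∃ (Λ : Type) (_ : MeasurableSpace Λ)
        (Δ : EuclideanSpace ℂ (Fin d) → Set (Measure Λ))
        (Γ : (EuclideanSpace ℂ (Fin d) ≃ₗᵢ[ℂ] EuclideanSpace ℂ (Fin d)) →
          Set (Kernel Λ Λ))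
        (Ξ : OrthonormalBasis (Fin d) ℂ (EuclideanSpace ℂ (Fin d)) →
          Set (Fin d → Λ → ℝ)),
      -- (a)-(d): nonemptiness and well-formedness of the model's data
      (∀ ψ : EuclideanSpace ℂ (Fin d), ‖ψ‖ = 1 →
        (Δ ψ).Nonempty ∧ ∀ μ ∈ Δ ψ, IsProbabilityMeasure μ) ∧
      (∀ U : EuclideanSpace ℂ (Fin d) ≃ₗᵢ[ℂ] EuclideanSpace ℂ (Fin d),
        (Γ U).Nonempty ∧ ∀ γ ∈ Γ U, IsMarkovKernel γ) ∧
      (∀ e : OrthonormalBasis (Fin d) ℂ (EuclideanSpace ℂ (Fin d)),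
        (Ξ e).Nonempty ∧ ∀ P ∈ Ξ e,
          (∀ i : Fin d, Measurable (P i)) ∧
          (∀ x : Λ, (∀ i : Fin d, 0 ≤ P i x) ∧ ∑ i : Fin d, P i x = 1)) ∧
      -- Born rule
      (∀ ψ : EuclideanSpace ℂ (Fin d), ‖ψ‖ = 1 → ∀ μ ∈ Δ ψ,
        ∀ e : OrthonormalBasis (Fin d) ℂ (EuclideanSpace ℂ (Fin d)),
          ∀ P ∈ Ξ e, ∀ i : Fin d, ∫ x, P i x ∂μ = ‖⟪e i, ψ⟫_ℂ‖ ^ 2) ∧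
      -- closure under transformations
      (∀ ψ : EuclideanSpace ℂ (Fin d), ‖ψ‖ = 1 → ∀ μ ∈ Δ ψ,
        ∀ U : EuclideanSpace ℂ (Fin d) ≃ₗᵢ[ℂ] EuclideanSpace ℂ (Fin d),
          ∀ γ ∈ Γ U, μ.bind γ ∈ Δ (U ψ)) ∧
      -- ESMR/EMMR support condition
      (∀ Ω : Set Λ, MeasurableSet Ω →
        (∀ ν ∈ ⋃ i : Fin d, Δ (EuclideanSpace.single i (1 : ℂ)), ν Ω = 1) →
        ∀ ψ : EuclideanSpace ℂ (Fin d), ‖ψ‖ = 1 → ∀ μ ∈ Δ ψ, μ Ω = 1) := by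
  rintro ⟨Λ, mΛ, Δ, Γ, Ξ, hWF, hΓ, hΞ, hBorn, hTrans, hESMR⟩
  classical
  have hψ : ‖psi1 (d := d) hd‖ = 1 := norm_psi1 hd
  -- the standard-basis measurement
  obtain ⟨P, hP⟩ := (hΞ (EuclideanSpace.basisFun (Fin d) ℂ)).1
  obtain ⟨hPm, hPpt⟩ := (hΞ (EuclideanSpace.basisFun (Fin d) ℂ)).2 P hP
  have hPnn : ∀ i z, 0 ≤ P i z := fun i z => (hPpt z).1 i
  have hPle : ∀ i z, P i z ≤ 1 := by
    intro i z
    calc P i z ≤ ∑ j : Fin d, P j z :=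
          Finset.single_le_sum (fun j _ => (hPpt z).1 j) (Finset.mem_univ i)
      _ = 1 := (hPpt z).2
  have hBornStd : ∀ (φ : EuclideanSpace ℂ (Fin d)), ‖φ‖ = 1 → ∀ μ ∈ Δ φ, ∀ i : Fin d,
      ∫ z, P i z ∂μ = ‖⟪(ev i : Hd d), φ⟫_ℂ‖ ^ 2 := by
    intro φ hφ μ hμ i
    have h := hBorn φ hφ μ hμ (EuclideanSpace.basisFun (Fin d) ℂ) P hP i
    rwa [EuclideanSpace.basisFun_apply] at h
  -- the "deterministic outcome i" events for the standard measurement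
  set N : Fin d → Set Λ := fun i => {z | P i z = 1} with hNdef
  have hNm : ∀ i, MeasurableSet (N i) := fun i => hPm i (measurableSet_singleton 1)
  have hNfull : ∀ i : Fin d, ∀ ν ∈ Δ (ev i), ν (N i) = 1 := by
    intro i ν hν
    haveI := (hWF (ev i) (norm_ev i)).2 ν hν
    refine full_of_integral_one (hPm i) (hPnn i) (hPle i) ?_
    rw [hBornStd (ev i) (norm_ev i) ν hν i, inner_ev_ev, if_pos rfl]
    simp
  have hNnull : ∀ (μ' : Measure Λ), μ' ∈ Δ (psi1 hd) → IsProbabilityMeasure μ' →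
      ∀ i : Fin d, 4 ≤ i.1 → μ' (N i) = 0 := by
    intro μ' hμ' hpm i hi
    haveI := hpm
    refine null_of_integral_zero (hPm i) (hPnn i) (hPle i) ?_
    rw [hBornStd (psi1 hd) hψ μ' hμ' i, inner_ev_psi1_high hd hi]
    simp
  -- threshold
  set κ : ℝ≥0∞ := ((d : ℝ≥0∞) + 1)⁻¹ with hκdef
  have hκ0 : κ ≠ 0 := ENNReal.inv_ne_zero.mpr (by simp)
  have hκtop : κ ≠ ⊤ := ENNReal.inv_ne_top.mpr (by simp)
  -- a preparation of ψ₁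
  obtain ⟨μ0, hμ0⟩ := (hWF (psi1 hd) hψ).1
  haveI hμ0P : IsProbabilityMeasure μ0 := (hWF (psi1 hd) hψ).2 μ0 hμ0
  -- Step 1: some eigenstate has overlap at least κ with μ0
  have claimA : ∃ i0 : Fin d, ∀ G : Set Λ, MeasurableSet G →
      (∀ ν ∈ Δ (ev i0), ν G = 1) → κ ≤ μ0 G := by
    by_contra hA
    push_neg at hA
    choose G hGm hGfull hGlt using hA
    have hΩfull : ∀ ν ∈ ⋃ i : Fin d, Δ (EuclideanSpace.single i (1 : ℂ)),
        ν (⋃ i, G i) = 1 := by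
      intro ν hν
      rw [Set.mem_iUnion] at hν
      obtain ⟨i, hi⟩ := hν
      haveI := (hWF (ev i) (norm_ev i)).2 ν hi
      have h1 : (1 : ℝ≥0∞) ≤ ν (⋃ i, G i) := by
        rw [← hGfull i ν hi]
        exact measure_mono (Set.subset_iUnion G i)
      exact le_antisymm prob_le_one h1
    have h1 : μ0 (⋃ i, G i) = 1 :=
      hESMR _ (MeasurableSet.iUnion hGm) hΩfull (psi1 hd) hψ μ0 hμ0
    have h2 : μ0 (⋃ i, G i) ≤ ∑' i : Fin d, μ0 (G i) := measure_iUnion_le G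
    have h3 : ∑' i : Fin d, μ0 (G i) ≤ ∑' _i : Fin d, κ :=
      ENNReal.tsum_le_tsum fun i => (hGlt i).le
    have h4 : ∑' _i : Fin d, κ = (d : ℝ≥0∞) * κ := by
      rw [tsum_fintype]
      simp [Finset.sum_const, nsmul_eq_mul]
    have h5 : (d : ℝ≥0∞) * κ < 1 := by
      have hlt : (d : ℝ≥0∞) < (d : ℝ≥0∞) + 1 := ENNReal.lt_add_right (by simp) one_ne_zero
      calc (d : ℝ≥0∞) * κ < ((d : ℝ≥0∞) + 1) * κ :=
            ENNReal.mul_lt_mul_left hκ0 hκtop hlt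
        _ = 1 := ENNReal.mul_inv_cancel (by simp) (by simp)
    rw [h1] at h2
    exact absurd (h2.trans (h3.trans_eq h4)) (not_le.mpr h5)
  obtain ⟨i0, hi0⟩ := claimA
  -- the index i0 must be among the first four
  have hi04 : i0.1 < 4 := by
    by_contra hge
    push_neg at hge
    have h := hi0 (N i0) (hNm i0) (hNfull i0)
    rw [hNnull μ0 hμ0 hμ0P i0 hge] at h
    exact hκ0 (le_zero_iff.mp h)
  have hχ : ‖chi (d := d) hd i0‖ = 1 := norm_chi hd hi04
  -- the reflection unitary and the transformed preparation μ1
  obtain ⟨γ, hγ⟩ := (hΓ (Submodule.reflection (ℂ ∙ (psi1 (d := d) hd)))).1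
  haveI hγM : IsMarkovKernel γ := (hΓ _).2 γ hγ
  have hμ1 : μ0.bind γ ∈ Δ (psi1 hd) := by
    have h := hTrans (psi1 hd) hψ μ0 hμ0 (Submodule.reflection (ℂ ∙ (psi1 hd))) γ hγ
    rwa [reflection_psi1 hd] at h
  haveI hμ1P : IsProbabilityMeasure (μ0.bind γ) := (hWF (psi1 hd) hψ).2 _ hμ1
  -- Step 2: overlap monotonicity under the transformation
  have hmono : ∀ F : Set Λ, MeasurableSet F → (∀ ν' ∈ Δ (chi hd i0), ν' F = 1) →
      κ ≤ (μ0.bind γ) F := by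
    intro F hF hFfull
    have hAm : MeasurableSet ((fun l => γ l F) ⁻¹' {1}) :=
      (Kernel.measurable_coe γ hF) (measurableSet_singleton 1)
    have hAfull : ∀ ν ∈ Δ (ev i0), ν ((fun l => γ l F) ⁻¹' {1}) = 1 := by
      intro ν hν
      haveI := (hWF (ev i0) (norm_ev i0)).2 ν hν
      have hbind : ν.bind γ ∈ Δ (chi hd i0) := by
        have h := hTrans (ev i0) (norm_ev i0) ν hν (Submodule.reflection (ℂ ∙ (psi1 hd))) γ hγ
        rwa [reflection_ev hd hi04] at h
      have h1 : (ν.bind γ) F = 1 := hFfull _ hbind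
      rw [Measure.bind_apply hF γ.aemeasurable] at h1
      exact lintegral_full (Kernel.measurable_coe γ hF) (fun z => prob_le_one) h1
    have hA := hi0 _ hAm hAfull
    have hle : μ0 ((fun l => γ l F) ⁻¹' {1}) ≤ ∫⁻ l, γ l F ∂μ0 :=
      measure_le_lintegral hAm (fun z hz => hz)
    rw [Measure.bind_apply hF γ.aemeasurable]
    exact hA.trans hle
  -- Step 3: the three antidistinguishing measurements
  have hBQ : ∀ j : Fin d, ∃ S T : Set Λ,
      MeasurableSet S ∧ MeasurableSet T ∧
      (j.1 < 4 → j ≠ i0 →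
        ((∀ ν ∈ Δ (ev j), ν S = 1) ∧
         (∀ ν ∈ Δ (ev i0), ν S = 1) ∧
         (∀ ν' ∈ Δ (chi hd i0), ν' T = 1) ∧
         (μ0.bind γ) (S ∩ T) = 0)) := by
    intro j
    by_cases hj : j.1 < 4 ∧ j ≠ i0
    · obtain ⟨hj4, hjne⟩ := hj
      obtain ⟨B, hB1, hB2, hB3, hB4, hB5⟩ := exists_measurement hd hi04 hj4 (Ne.symm hjne)
      obtain ⟨Q, hQ⟩ := (hΞ B).1
      obtain ⟨hQm, hQpt⟩ := (hΞ B).2 Q hQ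
      have hQnn : ∀ i z, 0 ≤ Q i z := fun i z => (hQpt z).1 i
      have hQle : ∀ i z, Q i z ≤ 1 := by
        intro i z
        calc Q i z ≤ ∑ k : Fin d, Q k z :=
              Finset.single_le_sum (fun k _ => (hQpt z).1 k) (Finset.mem_univ i)
          _ = 1 := (hQpt z).2
      set k0 : Fin d := ⟨0, by omega⟩ with hk0def
      set k1 : Fin d := ⟨1, by omega⟩ with hk1def
      have hk01 : k0 ≠ k1 := Fin.ne_of_val_ne (by norm_num)
      refine ⟨{z | Q k0 z = 0}, {z | Q k1 z = 0}, hQm k0 (measurableSet_singleton 0),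
        hQm k1 (measurableSet_singleton 0), fun _ _ => ⟨?_, ?_, ?_, ?_⟩⟩
      · intro ν hν
        haveI := (hWF (ev j) (norm_ev j)).2 ν hν
        refine full_of_integral_zero (hQm k0) (hQnn k0) (hQle k0) ?_
        rw [hBorn (ev j) (norm_ev j) ν hν B Q hQ k0, hB2]
        simp
      · intro ν hν
        haveI := (hWF (ev i0) (norm_ev i0)).2 ν hν
        refine full_of_integral_zero (hQm k0) (hQnn k0) (hQle k0) ?_
        rw [hBorn (ev i0) (norm_ev i0) ν hν B Q hQ k0, hB1]
        simp
      · intro ν' hν'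
        haveI := (hWF (chi hd i0) hχ).2 ν' hν'
        refine full_of_integral_zero (hQm k1) (hQnn k1) (hQle k1) ?_
        rw [hBorn (chi hd i0) hχ ν' hν' B Q hQ k1, hB4]
        simp
      · -- a.e. the two relevant outcomes exhaust the probability
        have hsum : (μ0.bind γ) {z | Q k0 z + Q k1 z = 1} = 1 := by
          refine full_of_integral_one ((hQm k0).add (hQm k1))
            (fun z => add_nonneg (hQnn k0 z) (hQnn k1 z)) (fun z => ?_) ?_
          · calc Q k0 z + Q k1 z = ∑ i ∈ ({k0, k1} : Finset (Fin d)), Q i z :=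
                  (Finset.sum_pair (f := fun i => Q i z) hk01).symm
              _ ≤ ∑ i : Fin d, Q i z :=
                  Finset.sum_le_sum_of_subset_of_nonneg (Finset.subset_univ _)
                    (fun i _ _ => hQnn i z)
              _ = 1 := (hQpt z).2
          · have e0 : ∫ z, Q k0 z ∂(μ0.bind γ) = 2⁻¹ := by
              rw [hBorn (psi1 hd) hψ _ hμ1 B Q hQ k0]
              exact hB3
            have e1 : ∫ z, Q k1 z ∂(μ0.bind γ) = 2⁻¹ := by
              rw [hBorn (psi1 hd) hψ _ hμ1 B Q hQ k1]
              exact hB5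
            rw [integral_add (bdd_integrable _ (hQm k0) (hQnn k0) (hQle k0))
              (bdd_integrable _ (hQm k1) (hQnn k1) (hQle k1)), e0, e1]
            norm_num
        have hcompl : (μ0.bind γ) {z | Q k0 z + Q k1 z = 1}ᶜ = 0 :=
          (prob_compl_eq_zero_iff (((hQm k0).add (hQm k1)) (measurableSet_singleton 1))).mpr hsum
        refine measure_mono_null (fun z hz => ?_) hcompl
        obtain ⟨hz0, hz1⟩ := hz
        simp only [Set.mem_setOf_eq] at hz0 hz1
        simp only [Set.mem_compl_iff, Set.mem_setOf_eq, hz0, hz1]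
        norm_num
    · exact ⟨∅, ∅, MeasurableSet.empty, MeasurableSet.empty,
        fun h1 h2 => absurd ⟨h1, h2⟩ hj⟩
  choose S T hSm hTm hprop using hBQ
  -- the index set of the three measurements
  set J : Finset (Fin d) := Finset.univ.filter (fun j : Fin d => j.1 < 4 ∧ j ≠ i0) with hJdef
  have hJmem : ∀ j : Fin d, j ∈ J ↔ (j.1 < 4 ∧ j ≠ i0) := by
    intro j; simp [hJdef]
  have hJne : ∃ j, j ∈ J := by
    by_cases h0 : i0 = (⟨0, by omega⟩ : Fin d)
    · refine ⟨⟨1, by omega⟩, (hJmem _).mpr ⟨by norm_num, ?_⟩⟩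
      rw [h0]
      exact Fin.ne_of_val_ne (by norm_num)
    · exact ⟨⟨0, by omega⟩, (hJmem _).mpr ⟨by norm_num, fun hc => h0 hc.symm⟩⟩
  -- the ESMR support set
  set BigN : Set Λ := ⋃ i : Fin d, (if 4 ≤ i.1 then N i else (∅ : Set Λ)) with hBigNdef
  have hBigNm : MeasurableSet BigN := by
    refine MeasurableSet.iUnion fun i => ?_
    by_cases h4 : 4 ≤ i.1
    · rw [if_pos h4]; exact hNm i
    · rw [if_neg h4]; exact MeasurableSet.empty
  have hBigNnull : (μ0.bind γ) BigN = 0 := by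
    refine measure_iUnion_null fun i => ?_
    by_cases h4 : 4 ≤ i.1
    · rw [if_pos h4]; exact hNnull _ hμ1 hμ1P i h4
    · rw [if_neg h4]; exact measure_empty
  set Ω' : Set Λ := (⋃ j ∈ J, S j) ∪ BigN with hΩ'def
  have hΩ'm : MeasurableSet Ω' := by
    refine MeasurableSet.union ?_ hBigNm
    exact MeasurableSet.iUnion fun j => MeasurableSet.iUnion fun _ => hSm j
  have hΩ'full : ∀ ν ∈ ⋃ i : Fin d, Δ (EuclideanSpace.single i (1 : ℂ)), ν Ω' = 1 := by
    intro ν hν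
    rw [Set.mem_iUnion] at hν
    obtain ⟨i, hi⟩ := hν
    haveI := (hWF (ev i) (norm_ev i)).2 ν hi
    refine le_antisymm prob_le_one ?_
    by_cases hi4 : i.1 < 4
    · by_cases hii : i = i0
      · obtain ⟨j, hjJ⟩ := hJne
        obtain ⟨hj4, hjne⟩ := (hJmem j).mp hjJ
        have hSfull : ν (S j) = 1 := by
          refine ((hprop j hj4 hjne)).2.1 ν ?_
          rw [← hii]; exact hi
        rw [← hSfull]
        refine measure_mono fun z hz => Or.inl ?_
        exact Set.mem_iUnion₂.mpr ⟨j, hjJ, hz⟩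
      · have hSfull : ν (S i) = 1 := ((hprop i hi4 hii)).1 ν hi
        rw [← hSfull]
        refine measure_mono fun z hz => Or.inl ?_
        exact Set.mem_iUnion₂.mpr ⟨i, (hJmem i).mpr ⟨hi4, hii⟩, hz⟩
    · have hNf : ν (N i) = 1 := hNfull i ν hi
      rw [← hNf]
      refine measure_mono fun z hz => Or.inr ?_
      exact Set.mem_iUnion.mpr ⟨i, by rw [if_pos (by omega)]; exact hz⟩
  have hΩ'1 : (μ0.bind γ) Ω' = 1 := hESMR Ω' hΩ'm hΩ'full (psi1 hd) hψ _ hμ1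
  -- the χ-support set
  set Fχ : Set Λ := ⋂ j ∈ J, T j with hFχdef
  have hFχm : MeasurableSet Fχ :=
    MeasurableSet.iInter fun j => MeasurableSet.iInter fun _ => hTm j
  have hFχfull : ∀ ν' ∈ Δ (chi hd i0), ν' Fχ = 1 := by
    intro ν' hν'
    haveI := (hWF (chi hd i0) hχ).2 ν' hν'
    rw [← prob_compl_eq_zero_iff hFχm]
    have hcompl : Fχᶜ = ⋃ j ∈ J, (T j)ᶜ := by
      rw [hFχdef]
      simp [Set.compl_iInter]
    rw [hcompl]
    refine le_antisymm ((measure_biUnion_finset_le J _).trans ?_) (by simp)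
    rw [Finset.sum_eq_zero]
    intro j hjJ
    obtain ⟨hj4, hjne⟩ := (hJmem j).mp hjJ
    rw [prob_compl_eq_zero_iff (hTm j)]
    exact ((hprop j hj4 hjne)).2.2.1 ν' hν'
  -- lower bound κ ≤ μ1 Fχ
  have hge : κ ≤ (μ0.bind γ) Fχ := hmono Fχ hFχm hFχfull
  -- upper bound μ1 Fχ = 0
  have hnull : (μ0.bind γ) Fχ = 0 := by
    have h1 : Fχ ⊆ ((⋃ j ∈ J, (S j ∩ T j)) ∪ BigN) ∪ Ω'ᶜ := by
      intro z hz
      by_cases hzΩ : z ∈ Ω'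
      · rcases hzΩ with hzS | hzN
        · obtain ⟨j, hjJ, hzj⟩ := Set.mem_iUnion₂.mp hzS
          have hzT : z ∈ T j := Set.mem_iInter₂.mp hz j hjJ
          exact Or.inl (Or.inl (Set.mem_iUnion₂.mpr ⟨j, hjJ, ⟨hzj, hzT⟩⟩))
        · exact Or.inl (Or.inr hzN)
      · exact Or.inr hzΩ
    refine measure_mono_null h1 ?_
    refine measure_union_null (measure_union_null ?_ hBigNnull) ?_
    · refine le_antisymm ((measure_biUnion_finset_le J _).trans ?_) (by simp)
      rw [Finset.sum_eq_zero]
      intro j hjJ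
      obtain ⟨hj4, hjne⟩ := (hJmem j).mp hjJ
      exact ((hprop j hj4 hjne)).2.2.2
    · rw [prob_compl_eq_zero_iff hΩ'm]
      exact hΩ'1
  rw [hnull] at hge
  exact hκ0 (le_zero_iff.mp hge)
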